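/- Let 0 < q < 1 and x₀ > 0, and set T' = (Γ(1 + q)·x₀)^{1/q}. The function x(t) = x₀ − t^q / Γ(1 + q) satisfies: x(t) > 0 for all t ∈ [0, T'), x(T') = 0, x(0) = x₀, and for every t ∈ (0, T') the Caputo fractional derivative satisfies D_*^q x(t) = −1 = 2 − 3·sign(x(t)); hence x is a classical solution of the discontinuous fractional differential equation D_*^q x = 2 − 3·sign(x) with x(0) = x₀ on [0, T'). -/

import Mathlib

open Set intervalIntegral

/-- The Caputo fractional derivative of order `q ∈ (0,1)` with starting point `0`:
`D_*^q x (t) = (1/Γ(1-q)) ∫_0^t (t-τ)^(-q) x'(τ) dτ`. -/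
noncomputable def caputoDeriv (q : ℝ) (x : ℝ → ℝ) (t : ℝ) : ℝ :=
  (1 / Real.Gamma (1 - q)) * ∫ τ in (0 : ℝ)..t, (t - τ) ^ (-q) * deriv x τ

lemma beta_real (q : ℝ) (hq0 : 0 < q) (hq1 : q < 1) :
    (∫ s in (0:ℝ)..1, s ^ (q-1) * (1-s) ^ (-q)) = Real.Gamma q * Real.Gamma (1-q) := by
  have h1 : ((∫ s in (0:ℝ)..1, s ^ (q-1) * (1-s) ^ (-q) : ℝ) : ℂ)
      = Complex.betaIntegral q (1-q) := by
    rw [← intervalIntegral.integral_ofReal]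
    unfold Complex.betaIntegral
    apply intervalIntegral.integral_congr
    intro s hs
    rw [Set.uIcc_of_le (by norm_num)] at hs
    push_cast
    rw [Complex.ofReal_cpow hs.1, Complex.ofReal_cpow (by linarith [hs.2])]
    push_cast
    ring_nf
  have h2 : Complex.betaIntegral q (1-q) = Complex.Gamma q * Complex.Gamma (1-q) := by
    have := Complex.Gamma_mul_Gamma_eq_betaIntegral (s := (q:ℂ)) (t := ((1-q:ℝ):ℂ))
      (by simpa using hq0) (by simp; linarith)
    push_cast at this
    rw [this]
    rw [show ((q:ℂ) + (1 - q)) = 1 by ring, Complex.Gamma_one, one_mul]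
  rw [← Complex.ofReal_inj]
  rw [h1, h2]
  push_cast [← Complex.Gamma_ofReal]
  norm_num

lemma scaled_beta (q t : ℝ) (hq0 : 0 < q) (hq1 : q < 1) (ht : 0 < t) :
    (∫ τ in (0:ℝ)..t, τ ^ (q-1) * (t-τ) ^ (-q)) = Real.Gamma q * Real.Gamma (1-q) := by
  have key : (∫ s in (0:ℝ)..1, (fun τ => τ ^ (q-1) * (t-τ) ^ (-q)) (t * s))
      = t⁻¹ • ∫ τ in (t*0)..(t*1), τ ^ (q-1) * (t-τ) ^ (-q) :=
    intervalIntegral.integral_comp_mul_left (fun τ => τ ^ (q-1) * (t-τ) ^ (-q)) ht.ne'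
  rw [mul_zero, mul_one] at key
  have h2 : (∫ s in (0:ℝ)..1, (fun τ => τ ^ (q-1) * (t-τ) ^ (-q)) (t * s))
      = t⁻¹ * ∫ s in (0:ℝ)..1, s ^ (q-1) * (1-s) ^ (-q) := by
    rw [← intervalIntegral.integral_const_mul]
    apply intervalIntegral.integral_congr_ae
    apply MeasureTheory.ae_of_all
    intro s hs
    rw [Set.uIoc_of_le (by norm_num)] at hs
    simp only
    have hs0 : 0 < s := hs.1
    have hs1 : s ≤ 1 := hs.2
    have h1s : 0 ≤ 1 - s := by linarith
    rw [show t - t * s = t * (1 - s) by ring,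
      Real.mul_rpow ht.le hs0.le, Real.mul_rpow ht.le h1s]
    rw [show t ^ (q-1) * s ^ (q-1) * (t ^ (-q) * (1-s) ^ (-q))
        = (t ^ (q-1) * t ^ (-q)) * (s ^ (q-1) * (1-s) ^ (-q)) by ring,
      ← Real.rpow_add ht]
    rw [show q - 1 + -q = -1 by ring, Real.rpow_neg_one]
  rw [h2] at key
  have := beta_real q hq0 hq1
  field_simp at key ⊢
  rw [smul_eq_mul, ← mul_assoc, mul_one_div_cancel ht.ne', one_mul] at key
  linarith [key]

/-- For `x₀ > 0`, the function `x(t) = x₀ - t^q/Γ(1+q)` is a classical solution of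
`D_*^q x = 2 - 3·sign(x)`, `x(0) = x₀`, on `[0, T')` with `T' = (Γ(1+q)·x₀)^(1/q)`. -/
theorem classical_solution_pos (q x₀ T' : ℝ) (x : ℝ → ℝ)
    (hq0 : 0 < q) (hq1 : q < 1) (hx₀ : 0 < x₀)
    (hT' : T' = (Real.Gamma (1 + q) * x₀) ^ (1 / q))
    (hx : x = fun t => x₀ - t ^ q / Real.Gamma (1 + q)) :
    (∀ t ∈ Set.Ico (0 : ℝ) T', 0 < x t) ∧ x T' = 0 ∧ x 0 = x₀ ∧
      ∀ t ∈ Set.Ioo (0 : ℝ) T',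
        caputoDeriv q x t = -1 ∧ caputoDeriv q x t = 2 - 3 * Real.sign (x t) := by
  have hΓ : 0 < Real.Gamma (1 + q) := Real.Gamma_pos_of_pos (by linarith)
  have hΓ1q : 0 < Real.Gamma (1 - q) := Real.Gamma_pos_of_pos (by linarith)
  have hΓq : 0 < Real.Gamma q := Real.Gamma_pos_of_pos hq0
  have hT'pos : 0 < T' := by
    rw [hT']
    exact Real.rpow_pos_of_pos (by positivity) _
  have hpos : ∀ t ∈ Set.Ico (0 : ℝ) T', 0 < x t := by
    intro t ht
    rw [hx]
    simp only
    rw [sub_pos, div_lt_iff₀ hΓ]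
    have h1 : t ^ q < T' ^ q := by
      rcases eq_or_lt_of_le ht.1 with h0 | h0
      · rw [← h0, Real.zero_rpow hq0.ne']
        exact Real.rpow_pos_of_pos hT'pos q
      · exact Real.rpow_lt_rpow (le_of_lt h0) ht.2 hq0
    calc t ^ q < T' ^ q := h1
      _ = Real.Gamma (1 + q) * x₀ := by
          rw [hT', ← Real.rpow_mul (by positivity), one_div, inv_mul_cancel₀ hq0.ne',
            Real.rpow_one]
      _ = x₀ * Real.Gamma (1 + q) := mul_comm _ _
  refine ⟨hpos, ?_, ?_, ?_⟩
  · rw [hx]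
    simp only
    rw [hT', ← Real.rpow_mul (by positivity), one_div, inv_mul_cancel₀ hq0.ne',
      Real.rpow_one, sub_eq_zero, eq_comm, div_eq_iff hΓ.ne', mul_comm]
  · rw [hx]; simp [Real.zero_rpow hq0.ne']
  · intro t ht
    obtain ⟨ht0, htT⟩ := ht
    -- compute the derivative
    have hderiv : ∀ τ : ℝ, τ ≠ 0 →
        deriv x τ = -(q * τ ^ (q - 1) / Real.Gamma (1 + q)) := by
      intro τ hτ
      have h1 : HasDerivAt (fun s : ℝ => s ^ q) (q * τ ^ (q - 1)) τ := by
        simpa [mul_comm] using Real.hasDerivAt_rpow_const (p := q) (Or.inl hτ)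
      have h2 : HasDerivAt x (-(q * τ ^ (q - 1) / Real.Gamma (1 + q))) τ := by
        rw [hx]
        simpa [div_eq_mul_inv, neg_mul] using
          ((h1.div_const (Real.Gamma (1 + q))).const_sub x₀)
      exact h2.deriv
    have hint : (∫ τ in (0 : ℝ)..t, (t - τ) ^ (-q) * deriv x τ)
        = -(q / Real.Gamma (1 + q)) * ∫ τ in (0:ℝ)..t, τ ^ (q-1) * (t-τ) ^ (-q) := by
      rw [← intervalIntegral.integral_const_mul]
      apply intervalIntegral.integral_congr_ae
      apply MeasureTheory.ae_of_all
      intro τ hτ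
      rw [Set.uIoc_of_le ht0.le] at hτ
      rw [hderiv τ hτ.1.ne']
      ring
    have hcap : caputoDeriv q x t = -1 := by
      rw [caputoDeriv, hint, scaled_beta q t hq0 hq1 ht0]
      have hG : Real.Gamma (1 + q) = q * Real.Gamma q := by
        rw [add_comm, Real.Gamma_add_one hq0.ne']
      rw [hG]
      field_simp
    refine ⟨hcap, ?_⟩
    rw [hcap, Real.sign_of_pos (hpos t ⟨ht0.le, htT⟩)]
    norm_num
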